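/- arXiv:2405.12657 — 2 statements merged into one kernel-verified Lean document; each statement's English description precedes it below -/
import Mathlib

section
/- Let N ∈ ℕ, let γ : [0,1] → ℝ^N be continuous, and let τ : [0,1] → ℂ be continuous with Z_N(τ(r); γ(r)) = 0 for all r ∈ [0,1] and with τ(0) real. If there exists r₁ ∈ [0,1] with τ(r₁) not real, then there exists r* ∈ [0, r₁) such that τ(r*) is real and, for every ε > 0, there exists r with r* < r ≤ r₁, r − r* < ε, |τ(r) − τ(r*)| < ε, τ(r) ≠ conj(τ(r)), and both τ(r) and conj(τ(r)) are zeros of Z_N(·; γ(r)). In other words, along a continuous family the zero τ can leave the real axis only by splitting into a pair of distinct complex-conjugate zeros that emerge from a real collision point τ(r*). -/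
open Complex Real

/-- Complex extension of the Riemann–Siegel theta function. -/
noncomputable def RSTheta (s : ℂ) : ℂ :=
  (-Complex.I / 2) *
    (Complex.log (Complex.Gamma (1 / 4 + Complex.I * s / 2)) -
      Complex.log (Complex.Gamma (1 / 4 - Complex.I * s / 2))) -
    s / 2 * Real.log Real.pi

/-- Generalized section of the Hardy Z-function with parameters `a ∈ ℝ^N`. -/
noncomputable def ZSection (N : ℕ) (a : Fin N → ℝ) (s : ℂ) : ℂ :=
  Complex.cos (RSTheta s) +
    ∑ k : Fin N, ((a k : ℂ) / Real.sqrt ((k : ℕ) + 2)) *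
      Complex.cos (RSTheta s - (Real.log ((k : ℕ) + 2) : ℂ) * s)

/-- The Riemann Hypothesis: every zero of ζ lies on the critical line or is a
trivial zero `s = -2m` for a positive integer `m`. -/
def RH : Prop :=
  ∀ s : ℂ, riemannZeta s = 0 → s.re = 1 / 2 ∨ ∃ m : ℕ, 0 < m ∧ s = -2 * (m : ℂ)

lemma log_conj_cases (w : ℂ) :
    Complex.log ((starRingEnd ℂ) w) = (starRingEnd ℂ) (Complex.log w) ∨
    Complex.log ((starRingEnd ℂ) w) = (starRingEnd ℂ) (Complex.log w) + 2 * Real.pi * Complex.I := by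
  by_cases h : w.arg = Real.pi
  · right
    have hw : (starRingEnd ℂ) w = w := by
      rw [Complex.conj_eq_iff_im]
      exact (Complex.arg_eq_pi_iff.mp h).2
    rw [hw, Complex.ext_iff]
    constructor
    · simp
    · simp [Complex.log_im, h]
      ring
  · left; exact Complex.log_conj w h

lemma RSTheta_conj (s : ℂ) :
    RSTheta ((starRingEnd ℂ) s) = (starRingEnd ℂ) (RSTheta s) ∨
    RSTheta ((starRingEnd ℂ) s) = (starRingEnd ℂ) (RSTheta s) + Real.pi ∨
    RSTheta ((starRingEnd ℂ) s) = (starRingEnd ℂ) (RSTheta s) - Real.pi := by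
  have hA : Complex.Gamma (1 / 4 + Complex.I * ((starRingEnd ℂ) s) / 2)
      = (starRingEnd ℂ) (Complex.Gamma (1 / 4 - Complex.I * s / 2)) := by
    rw [← Complex.Gamma_conj]
    congr 1
    simp [map_sub, map_div₀, Complex.conj_I, map_ofNat]
    ring
  have hB : Complex.Gamma (1 / 4 - Complex.I * ((starRingEnd ℂ) s) / 2)
      = (starRingEnd ℂ) (Complex.Gamma (1 / 4 + Complex.I * s / 2)) := by
    rw [← Complex.Gamma_conj]
    congr 1
    simp [map_add, map_div₀, Complex.conj_I, map_ofNat]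
    ring
  have hrs : (starRingEnd ℂ) (RSTheta s) =
      (Complex.I / 2) *
        ((starRingEnd ℂ) (Complex.log (Complex.Gamma (1 / 4 + Complex.I * s / 2))) -
          (starRingEnd ℂ) (Complex.log (Complex.Gamma (1 / 4 - Complex.I * s / 2)))) -
        (starRingEnd ℂ) s / 2 * Real.log Real.pi := by
    unfold RSTheta
    rw [map_sub, map_mul, map_mul, map_sub, map_div₀, map_div₀, map_neg]
    simp [Complex.conj_I, Complex.conj_ofReal, map_ofNat]
  have hL : RSTheta ((starRingEnd ℂ) s) =
      (-Complex.I / 2) *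
        (Complex.log ((starRingEnd ℂ) (Complex.Gamma (1 / 4 - Complex.I * s / 2))) -
          Complex.log ((starRingEnd ℂ) (Complex.Gamma (1 / 4 + Complex.I * s / 2)))) -
        (starRingEnd ℂ) s / 2 * Real.log Real.pi := by
    unfold RSTheta
    rw [hA, hB]
  rw [hL, hrs]
  rcases log_conj_cases (Complex.Gamma (1 / 4 + Complex.I * s / 2)) with h1 | h1 <;>
    rcases log_conj_cases (Complex.Gamma (1 / 4 - Complex.I * s / 2)) with h2 | h2 <;>
    rw [h1, h2]
  · left; ring
  · right; left; linear_combination (-(Real.pi : ℂ)) * Complex.I_sq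
  · right; right; linear_combination ((Real.pi : ℂ)) * Complex.I_sq
  · left; ring

lemma cos_add_pi' (z : ℂ) : Complex.cos (z + Real.pi) = -Complex.cos z := by
  rw [Complex.cos_add, ← Complex.ofReal_cos, ← Complex.ofReal_sin, Real.cos_pi, Real.sin_pi]
  push_cast
  ring

lemma cos_sub_pi' (z : ℂ) : Complex.cos (z - Real.pi) = -Complex.cos z := by
  rw [Complex.cos_sub, ← Complex.ofReal_cos, ← Complex.ofReal_sin, Real.cos_pi, Real.sin_pi]
  push_cast
  ring

/-- auxiliary form of the section with the theta argument decoupled. -/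
noncomputable def Zaux (N : ℕ) (a : Fin N → ℝ) (w t : ℂ) : ℂ :=
  Complex.cos t +
    ∑ k : Fin N, ((a k : ℂ) / Real.sqrt ((k : ℕ) + 2)) *
      Complex.cos (t - (Real.log ((k : ℕ) + 2) : ℂ) * w)

lemma ZSection_eq_Zaux (N : ℕ) (a : Fin N → ℝ) (s : ℂ) :
    ZSection N a s = Zaux N a s (RSTheta s) := rfl

lemma Zaux_add_pi (N : ℕ) (a : Fin N → ℝ) (w t : ℂ) :
    Zaux N a w (t + Real.pi) = -Zaux N a w t := by
  unfold Zaux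
  have h : ∀ k : Fin N,
      Complex.cos (t + (Real.pi : ℂ) - (Real.log ((k : ℕ) + 2) : ℂ) * w)
        = -Complex.cos (t - (Real.log ((k : ℕ) + 2) : ℂ) * w) := by
    intro k
    have : t + (Real.pi : ℂ) - (Real.log ((k : ℕ) + 2) : ℂ) * w
        = (t - (Real.log ((k : ℕ) + 2) : ℂ) * w) + Real.pi := by ring
    rw [this, cos_add_pi']
  simp only [cos_add_pi', h, mul_neg, Finset.sum_neg_distrib]
  ring

lemma Zaux_sub_pi (N : ℕ) (a : Fin N → ℝ) (w t : ℂ) :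
    Zaux N a w (t - Real.pi) = -Zaux N a w t := by
  have : t - (Real.pi : ℂ) = (t - 2 * Real.pi) + Real.pi := by ring
  rw [this, Zaux_add_pi]
  congr 1
  unfold Zaux
  have h : ∀ k : Fin N,
      Complex.cos (t - 2 * (Real.pi : ℂ) - (Real.log ((k : ℕ) + 2) : ℂ) * w)
        = Complex.cos (t - (Real.log ((k : ℕ) + 2) : ℂ) * w) := by
    intro k
    have : t - 2 * (Real.pi : ℂ) - (Real.log ((k : ℕ) + 2) : ℂ) * w
        = (t - (Real.log ((k : ℕ) + 2) : ℂ) * w) - 2 * Real.pi := by ring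
    rw [this]
    have h2 : ((2 : ℂ) * Real.pi) = ((2 * Real.pi : ℝ) : ℂ) := by push_cast; ring
    rw [Complex.cos_sub, h2, ← Complex.ofReal_cos, ← Complex.ofReal_sin,
      Real.cos_two_pi, Real.sin_two_pi]
    push_cast
    ring
  have h0 : Complex.cos (t - 2 * (Real.pi : ℂ)) = Complex.cos t := by
    have h2 : ((2 : ℂ) * Real.pi) = ((2 * Real.pi : ℝ) : ℂ) := by push_cast; ring
    rw [Complex.cos_sub, h2, ← Complex.ofReal_cos, ← Complex.ofReal_sin,
      Real.cos_two_pi, Real.sin_two_pi]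
    push_cast
    ring
  simp only [h, h0]

lemma Zaux_conj (N : ℕ) (a : Fin N → ℝ) (s : ℂ) :
    Zaux N a ((starRingEnd ℂ) s) ((starRingEnd ℂ) (RSTheta s))
      = (starRingEnd ℂ) (ZSection N a s) := by
  unfold ZSection Zaux
  rw [map_add, map_sum]
  congr 1
  · rw [← Complex.cos_conj]
  · apply Finset.sum_congr rfl
    intro k _
    rw [map_mul, map_div₀, Complex.conj_ofReal, Complex.conj_ofReal, ← Complex.cos_conj,
      map_sub, map_mul, Complex.conj_ofReal]

lemma ZSection_conj_zero (N : ℕ) (a : Fin N → ℝ) (s : ℂ)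
    (h : ZSection N a s = 0) : ZSection N a ((starRingEnd ℂ) s) = 0 := by
  have hc : (starRingEnd ℂ) (ZSection N a s) = 0 := by rw [h]; simp
  rw [ZSection_eq_Zaux]
  rcases RSTheta_conj s with ht | ht | ht <;> rw [ht]
  · rw [Zaux_conj]; exact hc
  · rw [Zaux_add_pi, Zaux_conj, hc, neg_zero]
  · rw [Zaux_sub_pi, Zaux_conj, hc, neg_zero]

/-- Along a continuous family of sections, a zero starting on the real line can leave
the real axis only by splitting into a pair of distinct complex-conjugate zeros
emerging from a real collision point. -/
theorem zero_leaves_real_axis_via_conjugate_pair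
    (N : ℕ) (γ : ℝ → Fin N → ℝ) (τ : ℝ → ℂ)
    (hγ : ContinuousOn γ (Set.Icc 0 1)) (hτ : ContinuousOn τ (Set.Icc 0 1))
    (hzero : ∀ r ∈ Set.Icc (0 : ℝ) 1, ZSection N (γ r) (τ r) = 0)
    (hreal : (τ 0).im = 0)
    (r₁ : ℝ) (hr₁ : r₁ ∈ Set.Icc (0 : ℝ) 1) (hnr : (τ r₁).im ≠ 0) :
    ∃ rs : ℝ, rs ∈ Set.Ico 0 r₁ ∧ (τ rs).im = 0 ∧
      ∀ ε > 0, ∃ r : ℝ, rs < r ∧ r ≤ r₁ ∧ r - rs < ε ∧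
        ‖τ r - τ rs‖ < ε ∧
        τ r ≠ (starRingEnd ℂ) (τ r) ∧
        ZSection N (γ r) (τ r) = 0 ∧
        ZSection N (γ r) ((starRingEnd ℂ) (τ r)) = 0 := by
  obtain ⟨h0r₁, hr₁1⟩ := hr₁
  set S : Set ℝ := Set.Icc 0 r₁ ∩ (fun r => (τ r).im) ⁻¹' {0} with hS
  have hsub : Set.Icc (0:ℝ) r₁ ⊆ Set.Icc (0:ℝ) 1 :=
    Set.Icc_subset_Icc le_rfl hr₁1
  have hcont : ContinuousOn (fun r => (τ r).im) (Set.Icc 0 r₁) :=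
    (Complex.continuous_im.comp_continuousOn (hτ.mono hsub))
  have hSclosed : IsClosed S :=
    hcont.preimage_isClosed_of_isClosed isClosed_Icc isClosed_singleton
  have h0S : (0:ℝ) ∈ S := ⟨⟨le_rfl, h0r₁⟩, hreal⟩
  have hSne : S.Nonempty := ⟨0, h0S⟩
  have hSbdd : BddAbove S := ⟨r₁, fun x hx => hx.1.2⟩
  set rs := sSup S with hrs
  have hrsS : rs ∈ S := hSclosed.csSup_mem hSne hSbdd
  have hrs0 : 0 ≤ rs := hrsS.1.1
  have hrsr₁ : rs ≤ r₁ := hrsS.1.2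
  have hrsim : (τ rs).im = 0 := hrsS.2
  have hrslt : rs < r₁ := by
    rcases lt_or_eq_of_le hrsr₁ with h | h
    · exact h
    · exact absurd (h ▸ hrsim) hnr
  refine ⟨rs, ⟨hrs0, hrslt⟩, hrsim, ?_⟩
  intro ε hε
  have hrsIcc : rs ∈ Set.Icc (0:ℝ) 1 := ⟨hrs0, hrsr₁.trans hr₁1⟩
  have hct : ContinuousWithinAt τ (Set.Icc 0 1) rs := hτ rs hrsIcc
  rw [Metric.continuousWithinAt_iff] at hct
  obtain ⟨δ, hδ, hδ'⟩ := hct ε hε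
  set d := min δ ε with hd
  have hd0 : 0 < d := lt_min hδ hε
  set r := min (rs + d / 2) r₁ with hr
  have hrgt : rs < r := lt_min (by linarith) hrslt
  have hrle : r ≤ r₁ := min_le_right _ _
  have hrsub : r - rs < ε := by
    have : r ≤ rs + d / 2 := min_le_left _ _
    have hdε : d ≤ ε := min_le_right _ _
    linarith
  have hrIcc : r ∈ Set.Icc (0:ℝ) 1 := ⟨hrs0.trans hrgt.le, hrle.trans hr₁1⟩
  have hdist : ‖τ r - τ rs‖ < ε := by
    have hdd : dist r rs < δ := by
      rw [Real.dist_eq, abs_of_pos (by linarith)]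
      have : r ≤ rs + d / 2 := min_le_left _ _
      have hdδ : d ≤ δ := min_le_left _ _
      linarith
    have := hδ' hrIcc hdd
    rwa [Complex.dist_eq] at this
  have himr : (τ r).im ≠ 0 := by
    intro him
    have hrS : r ∈ S := ⟨⟨hrs0.trans hrgt.le, hrle⟩, him⟩
    exact absurd (le_csSup hSbdd hrS) (not_le.mpr hrgt)
  have hne : τ r ≠ (starRingEnd ℂ) (τ r) := by
    intro h
    exact himr (Complex.conj_eq_iff_im.mp h.symm)
  have hz : ZSection N (γ r) (τ r) = 0 := hzero r hrIcc
  exact ⟨r, hrgt, hrle, hrsub, hdist, hne, hz, ZSection_conj_zero _ _ _ hz⟩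
end

section
/- Let n ≥ 2 be an integer and let w > 0 be a real number satisfying w·e^w = (8n − 11)/(8e). Set t := (8n − 11)·π/(4w). Then (t/2)·log(t/(2π)) − t/2 − π/8 = (n − 3/2)·π; that is, the Franca–LeClair closed-form point t = (8n−11)π/(4·W_0((8n−11)/(8e))) solves the approximate Riemann–Siegel theta equation θ_approx(t) = (m + 1/2)π with θ_approx(t) = (t/2)log(t/(2π)) − t/2 − π/8 and m = n − 2. -/
open Real

/-- The Franca–LeClair closed-form point `t = (8n−11)π / (4·W₀((8n−11)/(8e)))`
solves the approximate theta equation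
`(t/2)·log(t/(2π)) − t/2 − π/8 = (n − 3/2)·π`. -/
theorem francaLeClair_solves_theta_equation
    (n : ℕ) (hn : 2 ≤ n) (w : ℝ) (hw : 0 < w)
    (hwe : w * Real.exp w = (8 * (n : ℝ) - 11) / (8 * Real.exp 1))
    (t : ℝ) (ht : t = (8 * (n : ℝ) - 11) * Real.pi / (4 * w)) :
    t / 2 * Real.log (t / (2 * Real.pi)) - t / 2 - Real.pi / 8 =
      ((n : ℝ) - 3 / 2) * Real.pi := by
  have hn2 : (2 : ℝ) ≤ (n : ℝ) := by exact_mod_cast hn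
  have hkey : (8 * (n : ℝ) - 11) = 8 * w * Real.exp (w + 1) := by
    have he : (0 : ℝ) < 8 * Real.exp 1 := by positivity
    field_simp at hwe
    rw [Real.exp_add]
    linarith [hwe]
  have hw0 : w ≠ 0 := ne_of_gt hw
  have hpi : (0 : ℝ) < Real.pi := Real.pi_pos
  have hdiv : t / (2 * Real.pi) = Real.exp (w + 1) := by
    rw [ht, hkey]
    field_simp
    ring
  rw [hdiv, Real.log_exp, ht]
  have hex : Real.exp (w + 1) ≠ 0 := Real.exp_ne_zero _
  field_simp
  ring
end
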